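/- Mirror theorem for the CR3BP: let (x, y, z) : ℝ → ℝ³ be a CR3BP solution defined for all time with r₁, r₂ positive throughout, and suppose it crosses the x–z plane perpendicularly at two times t = 0 and t = T/2 with T > 0, i.e. y(0) = ẋ(0) = ż(0) = 0 and y(T/2) = ẋ(T/2) = ż(T/2) = 0. Then the solution is periodic with period T: (x, y, z)(t + T) = (x, y, z)(t) and (ẋ, ẏ, ż)(t + T) = (ẋ, ẏ, ż)(t) for all t ∈ ℝ. -/

import Mathlib

/-- Distance from the satellite at position `(x, y, z)` to the Earth at `(-μ, 0, 0)`. -/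
noncomputable def r1 (μ x y z : ℝ) : ℝ := Real.sqrt ((x + μ) ^ 2 + y ^ 2 + z ^ 2)

/-- Distance from the satellite at position `(x, y, z)` to the Moon at `(1 - μ, 0, 0)`. -/
noncomputable def r2 (μ x y z : ℝ) : ℝ := Real.sqrt ((x - (1 - μ)) ^ 2 + y ^ 2 + z ^ 2)

/-- A twice-differentiable curve `(x, y, z) : I → ℝ³` is a solution of the circular
restricted three-body problem (CR3BP) in rotating barycentric coordinates with mass
parameter `μ` if it satisfies the CR3BP equations of motion on `I`, with both distances
to the primaries positive throughout. -/
structure IsCR3BPSolution (μ : ℝ) (I : Set ℝ) (x y z : ℝ → ℝ) : Prop where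
  diff_x : ∀ t ∈ I, DifferentiableAt ℝ x t
  diff_y : ∀ t ∈ I, DifferentiableAt ℝ y t
  diff_z : ∀ t ∈ I, DifferentiableAt ℝ z t
  diff_x' : ∀ t ∈ I, DifferentiableAt ℝ (deriv x) t
  diff_y' : ∀ t ∈ I, DifferentiableAt ℝ (deriv y) t
  diff_z' : ∀ t ∈ I, DifferentiableAt ℝ (deriv z) t
  r1_pos : ∀ t ∈ I, 0 < r1 μ (x t) (y t) (z t)
  r2_pos : ∀ t ∈ I, 0 < r2 μ (x t) (y t) (z t)
  eq_x : ∀ t ∈ I, deriv (deriv x) t =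
    2 * deriv y t + x t - (1 - μ) * (x t + μ) / (r1 μ (x t) (y t) (z t)) ^ 3
      - μ * (x t - (1 - μ)) / (r2 μ (x t) (y t) (z t)) ^ 3
  eq_y : ∀ t ∈ I, deriv (deriv y) t =
    -2 * deriv x t + y t - (1 - μ) * y t / (r1 μ (x t) (y t) (z t)) ^ 3
      - μ * y t / (r2 μ (x t) (y t) (z t)) ^ 3
  eq_z : ∀ t ∈ I, deriv (deriv z) t =
    -((1 - μ) * z t) / (r1 μ (x t) (y t) (z t)) ^ 3
      - μ * z t / (r2 μ (x t) (y t) (z t)) ^ 3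

namespace CR3BPMirror

abbrev P6 := ℝ × ℝ × ℝ × ℝ × ℝ × ℝ

noncomputable def cr3bpF (μ : ℝ) (p : P6) : P6 :=
  (p.2.2.2.1, p.2.2.2.2.1, p.2.2.2.2.2,
   2 * p.2.2.2.2.1 + p.1 - (1 - μ) * (p.1 + μ) / (r1 μ p.1 p.2.1 p.2.2.1) ^ 3
     - μ * (p.1 - (1 - μ)) / (r2 μ p.1 p.2.1 p.2.2.1) ^ 3,
   -2 * p.2.2.2.1 + p.2.1 - (1 - μ) * p.2.1 / (r1 μ p.1 p.2.1 p.2.2.1) ^ 3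
     - μ * p.2.1 / (r2 μ p.1 p.2.1 p.2.2.1) ^ 3,
   -((1 - μ) * p.2.2.1) / (r1 μ p.1 p.2.1 p.2.2.1) ^ 3
     - μ * p.2.2.1 / (r2 μ p.1 p.2.1 p.2.2.1) ^ 3)

def Omega (μ : ℝ) : Set P6 := {p | 0 < r1 μ p.1 p.2.1 p.2.2.1 ∧ 0 < r2 μ p.1 p.2.1 p.2.2.1}

lemma r1_neg_y (μ a b c : ℝ) : r1 μ a (-b) c = r1 μ a b c := by simp [r1, neg_sq]

lemma r2_neg_y (μ a b c : ℝ) : r2 μ a (-b) c = r2 μ a b c := by simp [r2, neg_sq]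

lemma contDiffAt_cr3bpF (μ : ℝ) (p : P6) (h1 : 0 < r1 μ p.1 p.2.1 p.2.2.1)
    (h2 : 0 < r2 μ p.1 p.2.1 p.2.2.1) : ContDiffAt ℝ 1 (cr3bpF μ) p := by
  have hq1 : (p.1 + μ) ^ 2 + p.2.1 ^ 2 + p.2.2.1 ^ 2 ≠ 0 := by
    rw [r1, Real.sqrt_pos] at h1; exact ne_of_gt h1
  have hq2 : (p.1 - (1 - μ)) ^ 2 + p.2.1 ^ 2 + p.2.2.1 ^ 2 ≠ 0 := by
    rw [r2, Real.sqrt_pos] at h2; exact ne_of_gt h2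
  have hr1 : ContDiffAt ℝ 1 (fun q : P6 => (r1 μ q.1 q.2.1 q.2.2.1) ^ 3) p := by
    have hq : ContDiffAt ℝ 1 (fun q : P6 => (q.1 + μ) ^ 2 + q.2.1 ^ 2 + q.2.2.1 ^ 2) p := by
      fun_prop
    simp only [r1]
    exact (hq.sqrt hq1).pow 3
  have hr2 : ContDiffAt ℝ 1 (fun q : P6 => (r2 μ q.1 q.2.1 q.2.2.1) ^ 3) p := by
    have hq : ContDiffAt ℝ 1 (fun q : P6 => (q.1 - (1 - μ)) ^ 2 + q.2.1 ^ 2 + q.2.2.1 ^ 2) p := by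
      fun_prop
    simp only [r2]
    exact (hq.sqrt hq2).pow 3
  have hne1 : (r1 μ p.1 p.2.1 p.2.2.1) ^ 3 ≠ 0 := pow_ne_zero 3 (ne_of_gt h1)
  have hne2 : (r2 μ p.1 p.2.1 p.2.2.1) ^ 3 ≠ 0 := pow_ne_zero 3 (ne_of_gt h2)
  unfold cr3bpF
  refine ContDiffAt.prodMk (by fun_prop) (ContDiffAt.prodMk (by fun_prop)
    (ContDiffAt.prodMk (by fun_prop) (ContDiffAt.prodMk ?_ (ContDiffAt.prodMk ?_ ?_))))
  · exact (((by fun_prop : ContDiffAt ℝ 1 (fun q : P6 => 2 * q.2.2.2.2.1 + q.1) p).sub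
      ((by fun_prop : ContDiffAt ℝ 1 (fun q : P6 => (1 - μ) * (q.1 + μ)) p).div hr1 hne1)).sub
      ((by fun_prop : ContDiffAt ℝ 1 (fun q : P6 => μ * (q.1 - (1 - μ))) p).div hr2 hne2))
  · exact (((by fun_prop : ContDiffAt ℝ 1 (fun q : P6 => -2 * q.2.2.2.1 + q.2.1) p).sub
      ((by fun_prop : ContDiffAt ℝ 1 (fun q : P6 => (1 - μ) * q.2.1) p).div hr1 hne1)).sub
      ((by fun_prop : ContDiffAt ℝ 1 (fun q : P6 => μ * q.2.1) p).div hr2 hne2))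
  · exact (((by fun_prop : ContDiffAt ℝ 1 (fun q : P6 => -((1 - μ) * q.2.2.1)) p).div hr1 hne1).sub
      ((by fun_prop : ContDiffAt ℝ 1 (fun q : P6 => μ * q.2.2.1) p).div hr2 hne2))

lemma ode_uniqueness {E : Type*} [NormedAddCommGroup E] [NormedSpace ℝ E]
    {F : E → E} {Ω : Set E} (hF : ∀ p ∈ Ω, ContDiffAt ℝ 1 F p)
    {f g : ℝ → E} (hf : ∀ t, HasDerivAt f (F (f t)) t) (hfΩ : ∀ t, f t ∈ Ω)
    (hg : ∀ t, HasDerivAt g (F (g t)) t)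
    {t₀ : ℝ} (heq : f t₀ = g t₀) : ∀ t, f t = g t := by
  have hfc : Continuous f := continuous_iff_continuousAt.mpr fun t => (hf t).continuousAt
  have hgc : Continuous g := continuous_iff_continuousAt.mpr fun t => (hg t).continuousAt
  have hcl : IsClosed {t | f t = g t} := isClosed_eq hfc hgc
  have hop : IsOpen {t | f t = g t} := by
    rw [isOpen_iff_mem_nhds]
    intro t₁ ht₁
    obtain ⟨K, U, hU, hL⟩ := (hF _ (hfΩ t₁)).exists_lipschitzOnWith
    have hfU : ∀ᶠ t in nhds t₁, f t ∈ U := hfc.continuousAt.preimage_mem_nhds hU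
    have hgU : ∀ᶠ t in nhds t₁, g t ∈ U := by
      apply hgc.continuousAt.preimage_mem_nhds
      rwa [← show f t₁ = g t₁ from ht₁]
    exact ODE_solution_unique_of_eventually (v := fun _ => F) (s := fun _ => U)
      (Filter.Eventually.of_forall fun _ => hL) (hfU.mono fun t ht => ⟨hf t, ht⟩) (hgU.mono fun t ht => ⟨hg t, ht⟩) ht₁
  have huniv : {t | f t = g t} = Set.univ := IsClopen.eq_univ ⟨hcl, hop⟩ ⟨t₀, heq⟩
  intro t
  exact (huniv ▸ Set.mem_univ t : t ∈ {t | f t = g t})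

noncomputable def traj (x y z : ℝ → ℝ) : ℝ → P6 :=
  fun t => (x t, y t, z t, deriv x t, deriv y t, deriv z t)

noncomputable def rtraj (c : ℝ) (x y z : ℝ → ℝ) : ℝ → P6 := fun t =>
  (x (2 * c - t), -y (2 * c - t), z (2 * c - t),
   -(deriv x (2 * c - t)), deriv y (2 * c - t), -(deriv z (2 * c - t)))

variable {μ : ℝ} {x y z : ℝ → ℝ}

lemma traj_mem (h : IsCR3BPSolution μ Set.univ x y z) (t : ℝ) : traj x y z t ∈ Omega μ :=
  ⟨h.r1_pos t trivial, h.r2_pos t trivial⟩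

lemma traj_hasDerivAt (h : IsCR3BPSolution μ Set.univ x y z) (t : ℝ) :
    HasDerivAt (traj x y z) (cr3bpF μ (traj x y z t)) t := by
  have H := ((h.diff_x t trivial).hasDerivAt.prodMk ((h.diff_y t trivial).hasDerivAt.prodMk
    ((h.diff_z t trivial).hasDerivAt.prodMk ((h.diff_x' t trivial).hasDerivAt.prodMk
    ((h.diff_y' t trivial).hasDerivAt.prodMk (h.diff_z' t trivial).hasDerivAt)))))
  have hval : cr3bpF μ (traj x y z t) = (deriv x t, deriv y t, deriv z t,
      deriv (deriv x) t, deriv (deriv y) t, deriv (deriv z) t) := by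
    simp only [cr3bpF, traj]
    rw [← h.eq_x t trivial, ← h.eq_y t trivial, ← h.eq_z t trivial]
  rw [hval]
  exact H

lemma rtraj_mem (h : IsCR3BPSolution μ Set.univ x y z) (c t : ℝ) :
    rtraj c x y z t ∈ Omega μ := by
  refine ⟨?_, ?_⟩ <;> simp only [rtraj, Omega, Set.mem_setOf_eq]
  · rw [r1_neg_y]; exact h.r1_pos _ trivial
  · rw [r2_neg_y]; exact h.r2_pos _ trivial

lemma rtraj_hasDerivAt (h : IsCR3BPSolution μ Set.univ x y z) (c t : ℝ) :
    HasDerivAt (rtraj c x y z) (cr3bpF μ (rtraj c x y z t)) t := by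
  have hτ : HasDerivAt (fun s : ℝ => 2 * c - s) (-1) t := (hasDerivAt_id t).const_sub (2 * c)
  set τ := 2 * c - t with hτdef
  have h1 : HasDerivAt (fun s => x (2 * c - s)) (deriv x τ * -1) t :=
    (h.diff_x τ trivial).hasDerivAt.comp t hτ
  have h2 : HasDerivAt (fun s => -y (2 * c - s)) (-(deriv y τ * -1)) t :=
    ((h.diff_y τ trivial).hasDerivAt.comp t hτ).neg
  have h3 : HasDerivAt (fun s => z (2 * c - s)) (deriv z τ * -1) t :=
    (h.diff_z τ trivial).hasDerivAt.comp t hτ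
  have h4 : HasDerivAt (fun s => -(deriv x (2 * c - s))) (-(deriv (deriv x) τ * -1)) t :=
    by have := ((h.diff_x' τ trivial).hasDerivAt.comp t hτ).neg; exact this
  have h5 : HasDerivAt (fun s => deriv y (2 * c - s)) (deriv (deriv y) τ * -1) t :=
    by have := (h.diff_y' τ trivial).hasDerivAt.comp t hτ; exact this
  have h6 : HasDerivAt (fun s => -(deriv z (2 * c - s))) (-(deriv (deriv z) τ * -1)) t :=
    by have := ((h.diff_z' τ trivial).hasDerivAt.comp t hτ).neg; exact this
  have H := h1.prodMk (h2.prodMk (h3.prodMk (h4.prodMk (h5.prodMk h6))))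
  have hval : cr3bpF μ (rtraj c x y z t) = (deriv x τ * -1, -(deriv y τ * -1), deriv z τ * -1,
      -(deriv (deriv x) τ * -1), deriv (deriv y) τ * -1, -(deriv (deriv z) τ * -1)) := by
    simp only [cr3bpF, rtraj, ← hτdef]
    rw [r1_neg_y, r2_neg_y]
    simp only [Prod.mk.injEq]
    refine ⟨by ring, by ring, by ring, ?_, ?_, ?_⟩
    · rw [h.eq_x τ trivial]; ring
    · rw [h.eq_y τ trivial]; ring
    · rw [h.eq_z τ trivial]; ring
  rw [hval]
  exact H

end CR3BPMirror


open CR3BPMirror in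
/-- **Mirror theorem for the CR3BP.** A CR3BP solution defined for all time that crosses
the x–z plane perpendicularly at `t = 0` and `t = T / 2` (with `T > 0`) is periodic with
period `T`, in both position and velocity. -/
theorem cr3bp_mirror_theorem (μ : ℝ) (hμ : μ ∈ Set.Ioo (0 : ℝ) 1)
    (T : ℝ) (hT : 0 < T) (x y z : ℝ → ℝ)
    (h : IsCR3BPSolution μ Set.univ x y z)
    (hy0 : y 0 = 0) (hx'0 : deriv x 0 = 0) (hz'0 : deriv z 0 = 0)
    (hyT : y (T / 2) = 0) (hx'T : deriv x (T / 2) = 0) (hz'T : deriv z (T / 2) = 0) :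
    ∀ t : ℝ,
      x (t + T) = x t ∧ y (t + T) = y t ∧ z (t + T) = z t ∧
      deriv x (t + T) = deriv x t ∧ deriv y (t + T) = deriv y t ∧
      deriv z (t + T) = deriv z t := by
  have hF : ∀ p ∈ Omega μ, ContDiffAt ℝ 1 (cr3bpF μ) p :=
    fun p hp => contDiffAt_cr3bpF μ p hp.1 hp.2
  have mir : ∀ c : ℝ, y c = 0 → deriv x c = 0 → deriv z c = 0 →
      ∀ s : ℝ, x (2 * c - s) = x s ∧ y (2 * c - s) = -y s ∧ z (2 * c - s) = z s ∧
        deriv x (2 * c - s) = -(deriv x s) ∧ deriv y (2 * c - s) = deriv y s ∧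
        deriv z (2 * c - s) = -(deriv z s) := by
    intro c hyc hxc hzc s
    have heq0 : traj x y z c = rtraj c x y z c := by
      simp only [traj, rtraj]
      rw [show 2 * c - c = c by ring, hyc, hxc, hzc]
      norm_num
    have huniq := ode_uniqueness hF (traj_hasDerivAt h) (traj_mem h)
      (rtraj_hasDerivAt h c) heq0 s
    simp only [traj, rtraj, Prod.mk.injEq] at huniq
    obtain ⟨e1, e2, e3, e4, e5, e6⟩ := huniq
    exact ⟨e1.symm, by linarith, e3.symm, by linarith, e5.symm, by linarith⟩
  intro t
  have a1 := mir (T / 2) hyT hx'T hz'T (-t)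
  have a0 := mir 0 hy0 hx'0 hz'0 t
  rw [show 2 * (T / 2) - -t = t + T by ring] at a1
  rw [show 2 * (0 : ℝ) - t = -t by ring] at a0
  obtain ⟨b1, b2, b3, b4, b5, b6⟩ := a1
  obtain ⟨c1, c2, c3, c4, c5, c6⟩ := a0
  exact ⟨by rw [b1, c1], by rw [b2, c2]; ring, by rw [b3, c3],
    by rw [b4, c4]; ring, by rw [b5, c5], by rw [b6, c6]; ring⟩
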